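/- arXiv:1603.06228 — 2 statements merged into one kernel-verified Lean document; each statement's English description precedes it below -/
import Mathlib

section
/- Let f be nilpotent on V with generator tuple partitioned by exponents as U = (U_{a_1}, …, U_{a_m}), a_1 < ⋯ < a_m. If i < j, w ∈ U_{a_i}, and y ∈ U_{a_j}, then there exists an automorphism α of V commuting with f such that α(y) = w + y. -/
open LinearMap

variable {K : Type*} [Field K] {V : Type*} [AddCommGroup V] [Module K V]

/-- `X` is hyperinvariant for `f`: invariant under every endomorphism commuting with `f`. -/
def Hinv (f : V →ₗ[K] V) (X : Submodule K V) : Prop :=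
  ∀ g : V →ₗ[K] V, g ∘ₗ f = f ∘ₗ g → X.map g ≤ X

/-- `X` is characteristic for `f`: `f`-invariant and fixed by every automorphism commuting with `f`. -/
def Chinv (f : V →ₗ[K] V) (X : Submodule K V) : Prop :=
  X.map f ≤ X ∧
    ∀ α : V ≃ₗ[K] V, (α : V →ₗ[K] V) ∘ₗ f = f ∘ₗ (α : V →ₗ[K] V) →
      X.map (α : V →ₗ[K] V) = X

/-- The cyclic subspace generated by `x`. -/
def cyc (f : V →ₗ[K] V) (x : V) : Submodule K V :=
  Submodule.span K (Set.range fun i : ℕ => (f ^ i) x)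

/-- `x` has exponent `ℓ`. -/
def ExpEq (f : V →ₗ[K] V) (x : V) (ℓ : ℕ) : Prop :=
  (f ^ ℓ) x = 0 ∧ ∀ j < ℓ, (f ^ j) x ≠ 0

/-- `x` has height `q`. -/
def HeightEq (f : V →ₗ[K] V) (x : V) (q : ℕ) : Prop :=
  x ∈ LinearMap.range (f ^ q) ∧ x ∉ LinearMap.range (f ^ (q + 1))

/-- The `r`-th Ulm invariant: number of Jordan blocks of size `r` (for `r ≥ 1`). -/
noncomputable def ulm (f : V →ₗ[K] V) (r : ℕ) : ℕ :=
  Module.finrank K ↥(LinearMap.ker f ⊓ LinearMap.range (f ^ (r - 1))) -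
    Module.finrank K ↥(LinearMap.ker f ⊓ LinearMap.range (f ^ r))

/-- `u` is a generator tuple with exponents `t`. -/
def IsGenTuple {k : ℕ} (f : V →ₗ[K] V) (u : Fin k → V) (t : Fin k → ℕ) : Prop :=
  (∀ i, ExpEq f (u i) (t i)) ∧ DirectSum.IsInternal (fun i => cyc f (u i))

/-- The summand `⟨U_a⟩` of all cyclic subspaces whose generator has exponent `a`. -/
def subU {k : ℕ} (f : V →ₗ[K] V) (u : Fin k → V) (t : Fin k → ℕ) (a : ℕ) : Submodule K V :=
  ⨆ i ∈ {i : Fin k | t i = a}, cyc f (u i)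

lemma pow_zero_of_ge (f : V →ₗ[K] V) {x : V} {ℓ : ℕ} (hx : (f ^ ℓ) x = 0)
    {n : ℕ} (hn : ℓ ≤ n) : (f ^ n) x = 0 := by
  have : f ^ n = f ^ (n - ℓ) * f ^ ℓ := by rw [← pow_add]; congr 1; omega
  rw [this, Module.End.mul_apply, hx, map_zero]

lemma li_of_exp (f : V →ₗ[K] V) {x : V} {ℓ : ℕ} (hx : ExpEq f x ℓ) :
    LinearIndependent K (fun j : Fin ℓ => (f ^ (j : ℕ)) x) := by
  rw [Fintype.linearIndependent_iff]
  intro g hg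
  suffices h : ∀ n : ℕ, ∀ j : Fin ℓ, (j : ℕ) = n → g j = 0 by
    exact fun j => h j j rfl
  intro n
  induction n using Nat.strong_induction_on with
  | _ n ih =>
    rintro j rfl
    have := congrArg (f ^ (ℓ - 1 - (j : ℕ))) hg
    rw [map_zero, map_sum] at this
    rw [Finset.sum_eq_single j] at this
    · simp only [map_smul, ← Module.End.mul_apply, ← pow_add] at this
      have hexp : ℓ - 1 - (j : ℕ) + (j : ℕ) = ℓ - 1 := by omega
      rw [hexp] at this
      have hne := hx.2 (ℓ - 1) (by omega)
      rcases smul_eq_zero.mp this with h | h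
      · exact h
      · exact absurd h hne
    · intro b _ hb
      rcases lt_or_gt_of_ne hb with hlt | hgt
      · rw [ih b hlt b rfl, zero_smul, map_zero]
      · rw [map_smul, ← Module.End.mul_apply, ← pow_add,
          pow_zero_of_ge f hx.1 (by omega : ℓ ≤ ℓ - 1 - (j:ℕ) + (b:ℕ)), smul_zero]
    · intro h; exact absurd (Finset.mem_univ j) h

lemma span_eq_cyc (f : V →ₗ[K] V) {x : V} {ℓ : ℕ} (hx : (f ^ ℓ) x = 0) :
    Submodule.span K (Set.range fun j : Fin ℓ => (f ^ (j : ℕ)) x) = cyc f x := by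
  apply le_antisymm
  · exact Submodule.span_mono (by rintro _ ⟨j, rfl⟩; exact ⟨j, rfl⟩)
  · apply Submodule.span_le.mpr
    rintro _ ⟨n, rfl⟩
    show (f ^ n) x ∈ _
    by_cases hn : n < ℓ
    · exact Submodule.subset_span ⟨⟨n, hn⟩, rfl⟩
    · rw [pow_zero_of_ge f hx (by omega)]; exact Submodule.zero_mem _


noncomputable def cycBasis (f : V →ₗ[K] V) {x : V} {ℓ : ℕ} (hx : ExpEq f x ℓ) :
    Module.Basis (Fin ℓ) K (cyc f x) :=
  (Module.Basis.span (li_of_exp f hx)).map (LinearEquiv.ofEq _ _ (span_eq_cyc f hx.1))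

lemma cycBasis_coe (f : V →ₗ[K] V) {x : V} {ℓ : ℕ} (hx : ExpEq f x ℓ) (j : Fin ℓ) :
    (cycBasis f hx j : V) = (f ^ (j : ℕ)) x := by
  simp [cycBasis, Module.Basis.span_apply]

theorem stmt4 [FiniteDimensional K V] (f : V →ₗ[K] V) (hf : IsNilpotent f)
    {k : ℕ} (u : Fin k → V) (t : Fin k → ℕ) (ht : Monotone t) (hu : IsGenTuple f u t)
    (p q : Fin k) (hpq : t p < t q) :
    ∃ α : V ≃ₗ[K] V, (α : V →ₗ[K] V) ∘ₗ f = f ∘ₗ (α : V →ₗ[K] V) ∧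
      α (u q) = u p + u q := by
  obtain ⟨hexp, hint⟩ := hu
  set B := hint.collectedBasis (fun i => cycBasis f (hexp i)) with hBdef
  have hB : ∀ s : Σ i : Fin k, Fin (t i), B s = (f ^ (s.2 : ℕ)) (u s.1) := by
    intro s
    rw [hBdef, DirectSum.IsInternal.collectedBasis_coe]
    exact cycBasis_coe f (hexp s.1) s.2
  set h : V →ₗ[K] V :=
    B.constr K (fun s => if s.1 = q then (f ^ ((s.2 : Fin (t s.1)) : ℕ)) (u p) else 0)
    with hhdef
  have hkey : ∀ (i : Fin k) (n : ℕ),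
      h ((f ^ n) (u i)) = if i = q then (f ^ n) (u p) else 0 := by
    intro i n
    by_cases hn : n < t i
    · have := B.constr_basis K
        (fun s => if s.1 = q then (f ^ ((s.2 : Fin (t s.1)) : ℕ)) (u p) else 0) ⟨i, ⟨n, hn⟩⟩
      rw [hB ⟨i, ⟨n, hn⟩⟩] at this
      exact this
    · rw [pow_zero_of_ge f (hexp i).1 (by omega), map_zero]
      split
      · next heq =>
        subst heq
        rw [pow_zero_of_ge f (hexp p).1 (by omega)]
      · rfl
  have hpq' : p ≠ q := fun e => by rw [e] at hpq; exact lt_irrefl _ hpq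
  have hh : ∀ v, h (h v) = 0 := by
    have : h ∘ₗ h = 0 := by
      apply B.ext
      rintro ⟨i, j⟩
      rw [LinearMap.comp_apply, hB ⟨i, j⟩, hkey]
      split
      · rw [hkey, if_neg hpq', LinearMap.zero_apply]
      · rw [map_zero, LinearMap.zero_apply]
    intro v
    exact congrFun (congrArg (fun g => g.toFun) this) v
  have hcomm : ∀ v, h (f v) = f (h v) := by
    have : h ∘ₗ f = f ∘ₗ h := by
      apply B.ext
      rintro ⟨i, j⟩
      have e1 : ∀ y : V, (f ^ ((j : ℕ) + 1)) y = f ((f ^ (j : ℕ)) y) := by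
        intro y; rw [pow_succ', Module.End.mul_apply]
      rw [LinearMap.comp_apply, LinearMap.comp_apply, hB ⟨i, j⟩, ← e1, hkey, hkey]
      split
      · exact e1 (u p)
      · rw [map_zero]
    exact fun v => congrFun (congrArg (fun g => g.toFun) this) v
  refine ⟨LinearEquiv.ofLinear (1 + h) (1 - h) ?_ ?_, ?_, ?_⟩
  · ext v
    simp only [LinearMap.comp_apply, LinearMap.add_apply, LinearMap.sub_apply,
      Module.End.one_apply, LinearMap.id_apply, map_sub]
    rw [hh]
    abel
  · ext v
    simp only [LinearMap.comp_apply, LinearMap.add_apply, LinearMap.sub_apply,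
      Module.End.one_apply, LinearMap.id_apply, map_add]
    rw [hh]
    abel
  · ext v
    simp only [LinearMap.comp_apply, LinearEquiv.coe_coe, LinearEquiv.ofLinear_apply,
      LinearMap.add_apply, Module.End.one_apply, map_add]
    rw [hcomm]
  · show (1 + h) (u q) = u p + u q
    rw [LinearMap.add_apply, Module.End.one_apply]
    have := hkey q 0
    rw [pow_zero, if_pos rfl] at this
    simp only [Module.End.one_apply] at this
    rw [this, add_comm]
end

section
/- Let X be a characteristic subspace of V for a nilpotent f, with exponent decomposition V = ⟨U_{a_1}⟩ ⊕ ⋯ ⊕ ⟨U_{a_m}⟩. Then X is hyperinvariant if and only if X = (X ∩ ⟨U_{a_1}⟩) ⊕ ⋯ ⊕ (X ∩ ⟨U_{a_m}⟩). -/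
open LinearMap

variable {K : Type*} [Field K] {V : Type*} [AddCommGroup V] [Module K V]

section
variable {k : ℕ} (f : V →ₗ[K] V) (u : Fin k → V) (t : Fin k → ℕ)

lemma pow_apply_eq_zero_of_le {x : V} {ℓ : ℕ} (hx : (f ^ ℓ) x = 0) {j : ℕ} (hj : ℓ ≤ j) :
    (f ^ j) x = 0 := by
  have : f ^ j = (f ^ (j - ℓ)) * (f ^ ℓ) := by rw [← pow_add]; congr 1; omega
  rw [this, Module.End.mul_apply, hx, map_zero]

lemma mem_cyc (x : V) (j : ℕ) : (f ^ j) x ∈ cyc f x :=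
  Submodule.subset_span ⟨j, rfl⟩

lemma li_iterates {x : V} {ℓ : ℕ} (hx : ExpEq f x ℓ) :
    LinearIndependent K (fun j : Fin ℓ => (f ^ (j : ℕ)) x) := by
  rw [Fintype.linearIndependent_iff]
  intro g hg
  by_contra hne
  push_neg at hne
  -- minimal index with nonzero coefficient
  have hex : ∃ j : ℕ, ∃ h : j < ℓ, g ⟨j, h⟩ ≠ 0 := by
    obtain ⟨j, hj⟩ := hne; exact ⟨j, j.2, hj⟩
  classical
  set j₀ := Nat.find hex with hj₀def
  obtain ⟨hj₀, hg₀⟩ := Nat.find_spec hex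
  have hmin : ∀ m : ℕ, m < j₀ → ∀ h : m < ℓ, g ⟨m, h⟩ = 0 := by
    intro m hm h
    by_contra hc
    exact absurd (Nat.find_min hex hm ⟨h, hc⟩) (by simp)
  -- apply f^(ℓ - 1 - j₀)
  have := congrArg (f ^ (ℓ - 1 - j₀)) hg
  rw [map_sum, map_zero] at this
  set jm : Fin ℓ := ⟨j₀, hj₀⟩ with hjm
  have hv : (jm : ℕ) = j₀ := rfl
  have hsum : ∀ j : Fin ℓ, (f ^ (ℓ - 1 - j₀)) (g j • (f ^ (j:ℕ)) x)
      = if j = jm then g j • (f ^ (ℓ - 1)) x else 0 := by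
    intro j
    rw [map_smul, ← Module.End.mul_apply, ← pow_add]
    rcases lt_trichotomy (j:ℕ) j₀ with h | h | h
    · rw [if_neg (Fin.ne_of_val_ne (by omega)), hmin _ h j.2, zero_smul]
    · have hj2 := j.2
      have he : ℓ - 1 - j₀ + (j:ℕ) = ℓ - 1 := by omega
      rw [if_pos (Fin.ext h), he]
    · rw [if_neg (Fin.ne_of_val_ne (by omega)),
        pow_apply_eq_zero_of_le f hx.1 (by omega), smul_zero]
  rw [Finset.sum_congr rfl (fun j _ => hsum j)] at this
  rw [Finset.sum_ite_eq' Finset.univ jm (fun j => g j • (f ^ (ℓ-1)) x)] at this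
  simp only [Finset.mem_univ, if_pos] at this
  exact hx.2 (ℓ - 1) (by omega) (by
    have := smul_eq_zero.mp this
    rcases this with h | h
    · exact absurd h hg₀
    · exact h)

lemma exists_basis (hu : IsGenTuple f u t) :
    ∃ B : Module.Basis (Σ i : Fin k, Fin (t i)) K V, ∀ p, B p = (f ^ (p.2 : ℕ)) (u p.1) := by
  classical
  have hexp := hu.1
  -- basis of each cyc
  have hli : ∀ i, LinearIndependent K
      (fun j : Fin (t i) => (⟨(f ^ (j:ℕ)) (u i), mem_cyc f (u i) j⟩ : cyc f (u i))) := by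
    intro i
    apply LinearIndependent.of_comp (cyc f (u i)).subtype
    exact li_iterates f (hexp i)
  have hspan : ∀ i, ⊤ ≤ Submodule.span K
      (Set.range (fun j : Fin (t i) => (⟨(f ^ (j:ℕ)) (u i), mem_cyc f (u i) j⟩ : cyc f (u i)))) := by
    intro i
    rw [← Submodule.map_le_map_iff_of_injective (Submodule.injective_subtype (cyc f (u i)))]
    rw [Submodule.map_span, Submodule.map_top, Submodule.range_subtype]
    rw [← Set.range_comp]
    show cyc f (u i) ≤ _
    apply Submodule.span_le.mpr
    rintro _ ⟨j, rfl⟩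
    show (f ^ j) (u i) ∈ _
    rcases lt_or_ge j (t i) with h | h
    · exact Submodule.subset_span ⟨⟨j, h⟩, rfl⟩
    · rw [pow_apply_eq_zero_of_le f (hexp i).1 h]; exact Submodule.zero_mem _
  let bC : ∀ i, Module.Basis (Fin (t i)) K (cyc f (u i)) := fun i => Module.Basis.mk (hli i) (hspan i)
  refine ⟨hu.2.collectedBasis bC, ?_⟩
  intro p
  rw [DirectSum.IsInternal.collectedBasis_coe]
  show ((bC p.1) p.2 : V) = _
  simp [bC, Module.Basis.mk_apply]

end

section Phi
variable {k : ℕ} (f : V →ₗ[K] V) (u : Fin k → V) (t : Fin k → ℕ)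
variable (B : Module.Basis (Σ i : Fin k, Fin (t i)) K V)

/-- The `f`-semilinear map determined by `u i ↦ v i`. -/
noncomputable def phi (v : Fin k → V) : V →ₗ[K] V :=
  B.constr K fun p => (f ^ (p.2 : ℕ)) (v p.1)

/-- The projection onto `subU a` along the other summands. -/
noncomputable def piU (a : ℕ) : V →ₗ[K] V :=
  phi f t B (fun i => if t i = a then u i else 0)

variable {f u t B}
variable (hB : ∀ p, B p = (f ^ (p.2 : ℕ)) (u p.1))
include hB

omit hB in
lemma phi_basis (v : Fin k → V) (p : Σ i : Fin k, Fin (t i)) :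
    phi f t B v (B p) = (f ^ (p.2 : ℕ)) (v p.1) :=
  B.constr_basis K _ p

lemma phi_iter (hu0 : ∀ i, (f ^ (t i)) (u i) = 0) {v : Fin k → V}
    (hv : ∀ i, (f ^ (t i)) (v i) = 0) (i : Fin k) (j : ℕ) :
    phi f t B v ((f ^ j) (u i)) = (f ^ j) (v i) := by
  rcases lt_or_ge j (t i) with h | h
  · have := phi_basis (f := f) (B := B) v ⟨i, ⟨j, h⟩⟩
    rw [hB ⟨i, ⟨j, h⟩⟩] at this
    exact this
  · rw [pow_apply_eq_zero_of_le f (hu0 i) h, pow_apply_eq_zero_of_le f (hv i) h]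
    exact map_zero _

lemma phi_comm (hu0 : ∀ i, (f ^ (t i)) (u i) = 0) {v : Fin k → V}
    (hv : ∀ i, (f ^ (t i)) (v i) = 0) :
    phi f t B v ∘ₗ f = f ∘ₗ phi f t B v := by
  apply B.ext
  intro p
  rw [hB p]
  simp only [LinearMap.comp_apply]
  rw [show f ((f ^ (p.2:ℕ)) (u p.1)) = (f ^ ((p.2:ℕ)+1)) (u p.1) from by
      rw [pow_succ', Module.End.mul_apply],
    phi_iter hB hu0 hv, phi_iter hB hu0 hv, pow_succ', Module.End.mul_apply]

lemma phi_pow_comm (hu0 : ∀ i, (f ^ (t i)) (u i) = 0) {v : Fin k → V}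
    (hv : ∀ i, (f ^ (t i)) (v i) = 0) (m : ℕ) (x : V) :
    phi f t B v ((f ^ m) x) = (f ^ m) (phi f t B v x) := by
  induction m generalizing x with
  | zero => simp
  | succ m ih =>
    have hc := LinearMap.congr_fun (phi_comm hB hu0 hv) x
    simp only [LinearMap.comp_apply] at hc
    simp only [pow_succ, Module.End.mul_apply]
    rw [ih, hc]

lemma phi_u (hu0 : ∀ i, (f ^ (t i)) (u i) = 0) : phi f t B u = LinearMap.id := by
  apply B.ext
  intro p
  rw [hB p, phi_iter hB hu0 hu0]
  rfl

lemma phi_comp (hu0 : ∀ i, (f ^ (t i)) (u i) = 0) {v w : Fin k → V}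
    (hv : ∀ i, (f ^ (t i)) (v i) = 0) (hw : ∀ i, (f ^ (t i)) (w i) = 0) :
    phi f t B v ∘ₗ phi f t B w = phi f t B (fun i => phi f t B v (w i)) := by
  apply B.ext
  intro p
  simp only [LinearMap.comp_apply]
  rw [hB p, phi_iter hB hu0 hw, phi_pow_comm hB hu0 hv, ← phi_iter hB hu0
    (v := fun i => phi f t B v (w i)) (fun i => by
      rw [← phi_pow_comm hB hu0 hv, hw i, map_zero])]

omit hB in
lemma comm_pow_apply {g : V →ₗ[K] V} (hg : g ∘ₗ f = f ∘ₗ g) (j : ℕ) (x : V) :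
    g ((f ^ j) x) = (f ^ j) (g x) := by
  induction j generalizing x with
  | zero => simp
  | succ m ih =>
    have hc := LinearMap.congr_fun hg x
    simp only [LinearMap.comp_apply] at hc
    simp only [pow_succ, Module.End.mul_apply]
    rw [ih, hc]

omit hB in
lemma cyc_le_subU {i : Fin k} {a : ℕ} (hi : t i = a) : cyc f (u i) ≤ subU f u t a :=
  le_iSup₂ (f := fun i _ => cyc f (u i)) i hi

omit hB in
lemma subU_le_ker (hu0 : ∀ i, (f ^ (t i)) (u i) = 0) (a : ℕ) :
    subU f u t a ≤ LinearMap.ker (f ^ a) := by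
  apply iSup₂_le
  intro i hi
  apply Submodule.span_le.mpr
  rintro _ ⟨j, rfl⟩
  simp only [SetLike.mem_coe, LinearMap.mem_ker]
  show (f ^ a) ((f ^ j) (u i)) = 0
  rw [← Module.End.mul_apply, ← pow_add, add_comm, pow_add, Module.End.mul_apply,
    pow_apply_eq_zero_of_le f (hu0 i) (le_of_eq hi), map_zero]

omit hB in
lemma piU_v0 (hu0 : ∀ i, (f ^ (t i)) (u i) = 0) (a : ℕ) :
    ∀ i, (f ^ (t i)) (if t i = a then u i else 0) = 0 := by
  intro i
  split
  · exact hu0 i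
  · exact map_zero _

lemma piU_iter (hu0 : ∀ i, (f ^ (t i)) (u i) = 0) (a : ℕ) (i : Fin k) (j : ℕ) :
    piU f u t B a ((f ^ j) (u i)) = if t i = a then (f ^ j) (u i) else 0 := by
  rw [piU, phi_iter hB hu0 (piU_v0 hu0 a), apply_ite (f ^ j), map_zero]

lemma piU_comm (hu0 : ∀ i, (f ^ (t i)) (u i) = 0) (a : ℕ) :
    piU f u t B a ∘ₗ f = f ∘ₗ piU f u t B a :=
  phi_comm hB hu0 (piU_v0 hu0 a)

lemma piU_mem (hu0 : ∀ i, (f ^ (t i)) (u i) = 0) (hspan : Submodule.span K (Set.range B) = ⊤)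
    (a : ℕ) (x : V) : piU f u t B a x ∈ subU f u t a := by
  have : Submodule.span K (Set.range B) ≤ (subU f u t a).comap (piU f u t B a) := by
    apply Submodule.span_le.mpr
    rintro _ ⟨p, rfl⟩
    simp only [SetLike.mem_coe, Submodule.mem_comap]
    rw [hB p, piU_iter hB hu0]
    split
    · next h => exact cyc_le_subU h (mem_cyc f _ _)
    · exact Submodule.zero_mem _
  rw [hspan] at this
  exact this Submodule.mem_top

lemma piU_id_on (hu0 : ∀ i, (f ^ (t i)) (u i) = 0) {a : ℕ} {x : V}
    (hx : x ∈ subU f u t a) : piU f u t B a x = x := by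
  have : subU f u t a ≤ LinearMap.ker (piU f u t B a - LinearMap.id) := by
    apply iSup₂_le
    intro i hi
    apply Submodule.span_le.mpr
    rintro _ ⟨j, rfl⟩
    simp only [SetLike.mem_coe, LinearMap.mem_ker, LinearMap.sub_apply]
    show piU f u t B a ((f ^ j) (u i)) - LinearMap.id ((f ^ j) (u i)) = 0
    rw [piU_iter hB hu0, if_pos (show t i = a from hi)]
    simp
  have h := this hx
  rw [LinearMap.mem_ker, LinearMap.sub_apply, sub_eq_zero] at h
  exact h

lemma piU_zero_on (hu0 : ∀ i, (f ^ (t i)) (u i) = 0) {a b : ℕ} (hab : b ≠ a) {x : V}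
    (hx : x ∈ subU f u t b) : piU f u t B a x = 0 := by
  have : subU f u t b ≤ LinearMap.ker (piU f u t B a) := by
    apply iSup₂_le
    intro i hi
    apply Submodule.span_le.mpr
    rintro _ ⟨j, rfl⟩
    simp only [SetLike.mem_coe, LinearMap.mem_ker]
    show piU f u t B a ((f ^ j) (u i)) = 0
    rw [piU_iter hB hu0, if_neg (by rw [show t i = b from hi]; exact hab)]
  exact this hx

lemma sum_piU (hu0 : ∀ i, (f ^ (t i)) (u i) = 0) :
    ∑ a ∈ (Set.finite_range t).toFinset, piU f u t B a = LinearMap.id := by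
  classical
  apply B.ext
  intro p
  rw [LinearMap.sum_apply, hB p]
  rw [Finset.sum_congr rfl (fun a _ => piU_iter hB hu0 a p.1 (p.2 : ℕ))]
  rw [Finset.sum_ite_eq (Set.finite_range t).toFinset (t p.1) (fun _ => (f ^ (p.2:ℕ)) (u p.1))]
  rw [if_pos (by simp [Set.Finite.mem_toFinset])]
  rfl

lemma subU_eq_span (hu0 : ∀ i, (f ^ (t i)) (u i) = 0) (a : ℕ) :
    subU f u t a = Submodule.span K (B '' {p : Σ i : Fin k, Fin (t i) | t p.1 = a}) := by
  apply le_antisymm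
  · apply iSup₂_le
    intro i hi
    apply Submodule.span_le.mpr
    rintro _ ⟨j, rfl⟩
    simp only [SetLike.mem_coe]
    show (f ^ j) (u i) ∈ _
    rcases lt_or_ge j (t i) with h | h
    · have : (f ^ j) (u i) = B ⟨i, ⟨j, h⟩⟩ := (hB ⟨i, ⟨j, h⟩⟩).symm
      rw [this]
      exact Submodule.subset_span ⟨⟨i, ⟨j, h⟩⟩, hi, rfl⟩
    · rw [pow_apply_eq_zero_of_le f (hu0 i) h]
      exact Submodule.zero_mem _
  · apply Submodule.span_le.mpr
    rintro _ ⟨p, hp, rfl⟩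
    simp only [SetLike.mem_coe]
    rw [hB p]
    exact cyc_le_subU hp (mem_cyc f _ _)

lemma map_f_subU (hu0 : ∀ i, (f ^ (t i)) (u i) = 0) (a : ℕ) :
    Submodule.map f (subU f u t a)
      = Submodule.span K (B '' {p : Σ i : Fin k, Fin (t i) | t p.1 = a ∧ 1 ≤ (p.2 : ℕ)}) := by
  rw [subU_eq_span hB hu0 a, Submodule.map_span]
  apply le_antisymm
  · apply Submodule.span_le.mpr
    rintro _ ⟨_, ⟨p, hp, rfl⟩, rfl⟩
    simp only [SetLike.mem_coe]
    rw [hB p]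
    have hstep : f ((f ^ (p.2 : ℕ)) (u p.1)) = (f ^ ((p.2 : ℕ) + 1)) (u p.1) := by
      rw [pow_succ', Module.End.mul_apply]
    rw [hstep]
    rcases lt_or_ge ((p.2 : ℕ) + 1) (t p.1) with h | h
    · have : (f ^ ((p.2:ℕ)+1)) (u p.1) = B ⟨p.1, ⟨(p.2:ℕ)+1, h⟩⟩ := (hB ⟨p.1, ⟨(p.2:ℕ)+1, h⟩⟩).symm
      rw [this]
      exact Submodule.subset_span ⟨⟨p.1, ⟨(p.2:ℕ)+1, h⟩⟩, ⟨hp, by simp⟩, rfl⟩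
    · rw [pow_apply_eq_zero_of_le f (hu0 p.1) h]
      exact Submodule.zero_mem _
  · apply Submodule.span_le.mpr
    rintro _ ⟨p, ⟨hp1, hp2⟩, rfl⟩
    simp only [SetLike.mem_coe]
    rw [hB p]
    have h1 : (p.2 : ℕ) - 1 < t p.1 := by have := p.2.2; omega
    have : (f ^ (p.2:ℕ)) (u p.1) = f (B ⟨p.1, ⟨(p.2:ℕ) - 1, h1⟩⟩) := by
      rw [hB ⟨p.1, ⟨(p.2:ℕ) - 1, h1⟩⟩]
      show _ = (f ∘ₗ (f ^ ((p.2:ℕ) - 1))) (u p.1)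
      rw [← Module.End.mul_eq_comp, ← pow_succ']
      congr 2
      omega
    rw [this]
    exact Submodule.subset_span ⟨B ⟨p.1, ⟨(p.2:ℕ) - 1, h1⟩⟩,
      ⟨⟨p.1, ⟨(p.2:ℕ) - 1, h1⟩⟩, hp1, rfl⟩, rfl⟩

lemma exists_unit_coord (hu0 : ∀ i, (f ^ (t i)) (u i) = 0) {a : ℕ} {z : V}
    (hz : z ∈ subU f u t a) (hz' : z ∉ Submodule.map f (subU f u t a)) :
    ∃ p : Σ i : Fin k, Fin (t i), t p.1 = a ∧ (p.2 : ℕ) = 0 ∧ B.repr z p ≠ 0 ∧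
      (↑(B.repr z).support : Set (Σ i : Fin k, Fin (t i))) ⊆ {p | t p.1 = a} := by
  rw [subU_eq_span hB hu0 a, Module.Basis.mem_span_image] at hz
  rw [map_f_subU hB hu0 a, Module.Basis.mem_span_image] at hz'
  rw [Set.not_subset] at hz'
  obtain ⟨p, hp, hp'⟩ := hz'
  have hps : t p.1 = a := hz hp
  have h0 : (p.2 : ℕ) = 0 := by
    by_contra h
    exact hp' ⟨hps, by omega⟩
  refine ⟨p, hps, h0, ?_, hz⟩
  simpa using hp

lemma exists_equiv_update [FiniteDimensional K V] (hf : IsNilpotent f)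
    (hu0 : ∀ i, (f ^ (t i)) (u i) = 0) (hspan : Submodule.span K (Set.range B) = ⊤)
    {a : ℕ} {z : V} (hz : z ∈ subU f u t a) (hz' : z ∉ Submodule.map f (subU f u t a)) :
    ∃ (α : V ≃ₗ[K] V) (i₁ : Fin k), t i₁ = a ∧
      ((α : V →ₗ[K] V) ∘ₗ f = f ∘ₗ (α : V →ₗ[K] V)) ∧
      (∀ j : ℕ, α ((f ^ j) (u i₁)) = (f ^ j) z) ∧
      (∀ i, i ≠ i₁ → ∀ j : ℕ, α ((f ^ j) (u i)) = (f ^ j) (u i)) := by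
  classical
  obtain ⟨p, hpa, hp0, hpc, hsupp⟩ := exists_unit_coord hB hu0 hz hz'
  obtain ⟨i₁, p2⟩ := p
  simp only at hpa hp0 hpc
  set v : Fin k → V := Function.update u i₁ z with hv
  have hva : ∀ i, v i = if i = i₁ then z else u i := by
    intro i
    by_cases h : i = i₁ <;> simp [hv, Function.update, h]
  have hv0 : ∀ i, (f ^ (t i)) (v i) = 0 := by
    intro i
    rw [hva i]
    split
    · next h => rw [h, hpa]
                exact LinearMap.mem_ker.mp (subU_le_ker hu0 a hz)
    · exact hu0 i
  set A := phi f t B v with hA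
  have hcomm : A ∘ₗ f = f ∘ₗ A := phi_comm hB hu0 hv0
  have hAiter : ∀ i j, A ((f ^ j) (u i)) = (f ^ j) (v i) := fun i j => phi_iter hB hu0 hv0 i j
  set R := LinearMap.range A with hR
  have hRf : ∀ x ∈ R, f x ∈ R := by
    rintro _ ⟨y, rfl⟩
    exact ⟨f y, by rw [← LinearMap.comp_apply, hcomm]; rfl⟩
  have hRpoly : ∀ g ∈ Algebra.adjoin K ({f} : Set (Module.End K V)), ∀ x ∈ R, g x ∈ R := by
    intro g hg
    induction hg using Algebra.adjoin_induction with
    | mem g hg => rw [Set.mem_singleton_iff.mp hg]; exact hRf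
    | algebraMap r => intro x hx; rw [Module.algebraMap_end_apply]; exact Submodule.smul_mem _ _ hx
    | add g g' hg hg' ih ih' => intro x hx; rw [LinearMap.add_apply]
                                exact Submodule.add_mem _ (ih x hx) (ih' x hx)
    | mul g g' hg hg' ih ih' => intro x hx; rw [Module.End.mul_apply]
                                exact ih _ (ih' x hx)
  have hRpow : ∀ (j : ℕ) (x), x ∈ R → (f ^ j) x ∈ R := by
    intro j
    induction j with
    | zero => intro x hx; simpa using hx
    | succ m ih =>
      intro x hx
      rw [pow_succ, Module.End.mul_apply]
      exact ih _ (hRf x hx)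
  have hvR : ∀ i, v i ∈ R := by
    intro i
    have := hAiter i 0
    simp only [pow_zero, Module.End.one_apply] at this
    exact ⟨u i, this⟩
  have hzR : z ∈ R := by have := hvR i₁; rwa [hva i₁, if_pos rfl] at this
  have huR : ∀ i, i ≠ i₁ → u i ∈ R := by
    intro i h
    have := hvR i
    rwa [hva i, if_neg h] at this
  have hzsum : z = ∑ q : Σ i : Fin k, Fin (t i), B.repr z q • B q := (B.sum_repr z).symm
  have hsplit : z = (∑ j : Fin (t i₁), B.repr z ⟨i₁, j⟩ • B ⟨i₁, j⟩)
      + ∑ i ∈ Finset.univ.erase i₁, ∑ j : Fin (t i), B.repr z ⟨i, j⟩ • B ⟨i, j⟩ := by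
    conv_lhs => rw [hzsum, ← Finset.univ_sigma_univ, Finset.sum_sigma]
    exact (Finset.add_sum_erase Finset.univ
      (fun i => ∑ j : Fin (t i), B.repr z ⟨i, j⟩ • B ⟨i, j⟩) (Finset.mem_univ i₁)).symm
  set s₂ := ∑ i ∈ Finset.univ.erase i₁, ∑ j : Fin (t i), B.repr z ⟨i, j⟩ • B ⟨i, j⟩ with hs₂
  have hs₂R : s₂ ∈ R :=
    Submodule.sum_mem _ (fun i hi => Submodule.sum_mem _ (fun j _ =>
      Submodule.smul_mem _ _ (by
        rw [hB ⟨i, j⟩]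
        exact hRpow _ _ (huR i (Finset.ne_of_mem_erase hi)))))
  set g₀ : Module.End K V := ∑ j : Fin (t i₁), B.repr z ⟨i₁, j⟩ • (f ^ (j : ℕ)) with hg₀
  have hg₀u : g₀ (u i₁) = ∑ j : Fin (t i₁), B.repr z ⟨i₁, j⟩ • B ⟨i₁, j⟩ := by
    rw [hg₀, LinearMap.sum_apply]
    exact Finset.sum_congr rfl fun j _ => by rw [LinearMap.smul_apply, hB ⟨i₁, j⟩]
  have hg₀R : g₀ (u i₁) ∈ R := by
    rw [hg₀u, eq_sub_of_add_eq (by rw [← hsplit] :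
      (∑ j : Fin (t i₁), B.repr z ⟨i₁, j⟩ • B ⟨i₁, j⟩) + s₂ = z)]
    exact Submodule.sub_mem _ hzR hs₂R
  have hpos : 0 < t i₁ := p2.pos
  set j0 : Fin (t i₁) := ⟨0, hpos⟩ with hj0
  have hp2 : p2 = j0 := Fin.ext hp0
  set c := B.repr z ⟨i₁, j0⟩ with hc
  have hcne : c ≠ 0 := by rw [hc, ← hp2]; exact hpc
  set n : Module.End K V := ∑ j ∈ Finset.univ.erase j0, B.repr z ⟨i₁, j⟩ • (f ^ (j : ℕ)) with hn
  have hg₀split : g₀ = c • (1 : Module.End K V) + n := by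
    rw [hg₀, ← Finset.add_sum_erase _ _ (Finset.mem_univ j0), ← hn]
    congr 1
  set m : Module.End K V := ∑ j ∈ Finset.univ.erase j0, B.repr z ⟨i₁, j⟩ • (f ^ ((j : ℕ) - 1))
    with hm
  have hnm : n = f * m := by
    rw [hn, hm, Finset.mul_sum]
    refine Finset.sum_congr rfl fun j hj => ?_
    have hj0' : (j : ℕ) ≠ 0 := by
      intro h
      exact (Finset.mem_erase.mp hj).1 (Fin.ext h)
    have hje : (j : ℕ) - 1 + 1 = (j : ℕ) := by omega
    rw [mul_smul_comm, ← pow_succ', hje]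
  have hfm : Commute f m := by
    show f * m = m * f
    rw [hm, Finset.mul_sum, Finset.sum_mul]
    refine Finset.sum_congr rfl fun j hj => ?_
    rw [mul_smul_comm, smul_mul_assoc, ← pow_succ', ← pow_succ]
  obtain ⟨N, hN⟩ := hf
  have hnN : n ^ N = 0 := by
    rw [hnm, Commute.mul_pow hfm, hN, zero_mul]
  set w : Module.End K V := (-(c⁻¹)) • n with hw
  have hwN : w ^ N = 0 := by rw [hw, smul_pow, hnN, smul_zero]
  set S := ∑ j ∈ Finset.range N, w ^ j with hS
  have hS1 : S * (1 - w) = 1 := by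
    have h : S * (w - 1) = w ^ N - 1 := geom_sum_mul w N
    have h2 : S * (1 - w) = -(S * (w - 1)) := by
      simp only [mul_sub, mul_one, neg_sub]
    rw [h2, h, hwN, zero_sub, neg_neg]
  have hg₀w : g₀ = c • ((1 : Module.End K V) - w) := by
    rw [hg₀split, hw, smul_sub, smul_smul, mul_neg, mul_inv_cancel₀ hcne, neg_smul, one_smul,
      sub_neg_eq_add]
  set inv := c⁻¹ • S with hinv
  have hinvg : inv * g₀ = 1 := by
    rw [hinv, hg₀w, smul_mul_assoc, mul_smul_comm, smul_smul, inv_mul_cancel₀ hcne, one_smul, hS1]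
  have hfA : f ∈ Algebra.adjoin K ({f} : Set (Module.End K V)) :=
    Algebra.self_mem_adjoin_singleton K f
  have hnA : n ∈ Algebra.adjoin K ({f} : Set (Module.End K V)) := by
    rw [hn]
    exact Subalgebra.sum_mem _ fun j _ => Subalgebra.smul_mem _ (Subalgebra.pow_mem _ hfA _) _
  have hinvA : inv ∈ Algebra.adjoin K ({f} : Set (Module.End K V)) := by
    rw [hinv, hS]
    exact Subalgebra.smul_mem _ (Subalgebra.sum_mem _ fun j _ => Subalgebra.pow_mem _
      (by rw [hw]; exact Subalgebra.smul_mem _ hnA _) _) _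
  have hu₁R : u i₁ ∈ R := by
    have h1 : u i₁ = (inv * g₀) (u i₁) := by rw [hinvg]; rfl
    rw [h1, Module.End.mul_apply]
    exact hRpoly inv hinvA _ hg₀R
  have hRtop : R = ⊤ := by
    rw [← top_le_iff, ← hspan]
    apply Submodule.span_le.mpr
    rintro _ ⟨q, rfl⟩
    simp only [SetLike.mem_coe]
    rw [hB q]
    apply hRpow
    by_cases hqi : q.1 = i₁
    · rw [hqi]; exact hu₁R
    · exact huR q.1 hqi
  have hsurj : Function.Surjective A := LinearMap.range_eq_top.mp hRtop
  have hinj : Function.Injective A := LinearMap.injective_iff_surjective.mpr hsurj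
  refine ⟨LinearEquiv.ofBijective A ⟨hinj, hsurj⟩, i₁, hpa, ?_, ?_, ?_⟩
  · exact hcomm
  · intro j
    show A _ = _
    rw [hAiter i₁ j, hva i₁, if_pos rfl]
  · intro i h j
    show A _ = _
    rw [hAiter i j, hva i, if_neg h]

lemma phi_apply_gen (hu0 : ∀ i, (f ^ (t i)) (u i) = 0) {v : Fin k → V}
    (hv : ∀ i, (f ^ (t i)) (v i) = 0) (i : Fin k) : phi f t B v (u i) = v i := by
  have := phi_iter hB hu0 hv i 0
  simpa using this

lemma exists_equiv_add (hu0 : ∀ i, (f ^ (t i)) (u i) = 0) {i₁ i : Fin k}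
    (hne : i ≠ i₁) (hti : t i = t i₁) :
    ∃ β : V ≃ₗ[K] V, ((β : V →ₗ[K] V) ∘ₗ f = f ∘ₗ (β : V →ₗ[K] V)) ∧
      (∀ j : ℕ, β ((f ^ j) (u i₁)) = (f ^ j) (u i₁) + (f ^ j) (u i)) := by
  classical
  set v := Function.update u i₁ (u i₁ + u i) with hvdef
  set v' := Function.update u i₁ (u i₁ - u i) with hv'def
  have hva : ∀ j, v j = if j = i₁ then u i₁ + u i else u j := by
    intro j
    by_cases h : j = i₁ <;> simp [hvdef, Function.update, h]
  have hv'a : ∀ j, v' j = if j = i₁ then u i₁ - u i else u j := by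
    intro j
    by_cases h : j = i₁ <;> simp [hv'def, Function.update, h]
  have hv0 : ∀ j, (f ^ (t j)) (v j) = 0 := by
    intro j
    rw [hva j]
    split
    · next h =>
      rw [h, map_add, hu0 i₁, ← hti, hu0 i, zero_add]
    · exact hu0 j
  have hv'0 : ∀ j, (f ^ (t j)) (v' j) = 0 := by
    intro j
    rw [hv'a j]
    split
    · next h =>
      rw [h, map_sub, hu0 i₁, ← hti, hu0 i, zero_sub, neg_zero]
    · exact hu0 j
  have hfun : (fun j => phi f t B v (v' j)) = u := by
    funext j
    rw [hv'a j]
    by_cases h : j = i₁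
    · rw [if_pos h, map_sub, phi_apply_gen hB hu0 hv0, phi_apply_gen hB hu0 hv0,
        hva i₁, if_pos rfl, hva i, if_neg hne, h]
      abel
    · rw [if_neg h, phi_apply_gen hB hu0 hv0, hva j, if_neg h]
  have hfun' : (fun j => phi f t B v' (v j)) = u := by
    funext j
    rw [hva j]
    by_cases h : j = i₁
    · rw [if_pos h, map_add, phi_apply_gen hB hu0 hv'0, phi_apply_gen hB hu0 hv'0,
        hv'a i₁, if_pos rfl, hv'a i, if_neg hne, h]
      abel
    · rw [if_neg h, phi_apply_gen hB hu0 hv'0, hv'a j, if_neg h]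
  have h1 : phi f t B v ∘ₗ phi f t B v' = LinearMap.id := by
    rw [phi_comp hB hu0 hv0 hv'0, hfun, phi_u hB hu0]
  have h2 : phi f t B v' ∘ₗ phi f t B v = LinearMap.id := by
    rw [phi_comp hB hu0 hv'0 hv0, hfun', phi_u hB hu0]
  refine ⟨LinearEquiv.ofLinear (phi f t B v) (phi f t B v') h1 h2, ?_, ?_⟩
  · exact phi_comm hB hu0 hv0
  · intro j
    show phi f t B v _ = _
    rw [phi_iter hB hu0 hv0, hva i₁, if_pos rfl, map_add]

omit hB in
lemma chinv_pow_stable {X : Submodule K V} (hX : Submodule.map f X ≤ X) (j : ℕ) :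
    ∀ x ∈ X, (f ^ j) x ∈ X := by
  induction j with
  | zero => intro x hx; simpa using hx
  | succ m ih =>
    intro x hx
    rw [pow_succ', Module.End.mul_apply]
    exact hX ⟨(f ^ m) x, ih x hx, rfl⟩

omit hB in
lemma map_pow_subU_le_subU (a : ℕ) (i₀ : ℕ) :
    Submodule.map (f ^ i₀) (subU f u t a) ≤ subU f u t a := by
  rw [subU, Submodule.map_iSup]
  apply iSup_le
  intro i
  rw [Submodule.map_iSup]
  apply iSup_le
  intro hi
  rw [cyc, Submodule.map_span]
  apply Submodule.span_le.mpr
  rintro _ ⟨_, ⟨j, rfl⟩, rfl⟩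
  have : (f ^ i₀) ((f ^ j) (u i)) = (f ^ (i₀ + j)) (u i) := by
    rw [pow_add, Module.End.mul_apply]
  rw [this]
  exact cyc_le_subU hi (mem_cyc f _ _)

lemma keyHom [FiniteDimensional K V] (hf : IsNilpotent f)
    (hu0 : ∀ i, (f ^ (t i)) (u i) = 0) (hspan : Submodule.span K (Set.range B) = ⊤)
    (X : Submodule K V) (hX : Chinv f X) (a : ℕ) :
    ∃ i₀ : ℕ, X ⊓ subU f u t a = Submodule.map (f ^ i₀) (subU f u t a) := by
  classical
  set U := subU f u t a with hU
  set P : ℕ → Prop := fun i => X ⊓ U ≤ Submodule.map (f ^ i) U with hP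
  have hP0 : P 0 := by
    rw [hP]
    simp only [pow_zero, Module.End.one_eq_id, Submodule.map_id]
    exact inf_le_right
  set i₀ := Nat.findGreatest P a with hi₀
  have hPi₀ : P i₀ := Nat.findGreatest_spec (Nat.zero_le a) hP0
  refine ⟨i₀, le_antisymm hPi₀ ?_⟩
  rcases Nat.lt_or_ge i₀ a with hlt | hge
  swap
  · rintro _ ⟨x, hxU, rfl⟩
    rw [pow_apply_eq_zero_of_le f (LinearMap.mem_ker.mp (subU_le_ker hu0 a hxU)) hge]
    exact Submodule.zero_mem _
  · have hnP : ¬ P (i₀ + 1) :=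
      Nat.findGreatest_is_greatest (Nat.lt_succ_self i₀) (by omega)
    have hex : ∃ y ∈ X ⊓ U, y ∉ Submodule.map (f ^ (i₀ + 1)) U := by
      by_contra hc
      push_neg at hc
      exact hnP hc
    obtain ⟨y, hyXU, hy'⟩ := hex
    obtain ⟨z, hzU, hzy⟩ := hPi₀ hyXU
    have hz' : z ∉ Submodule.map f U := by
      intro hc
      apply hy'
      have hmc : Submodule.map (f ^ (i₀ + 1)) U = Submodule.map (f ^ i₀) (Submodule.map f U) := by
        rw [pow_succ, Module.End.mul_eq_comp, Submodule.map_comp]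
      rw [hmc, ← hzy]
      exact Submodule.mem_map_of_mem hc
    obtain ⟨α, i₁, hi₁a, hαcomm, hαz, hαfix⟩ := exists_equiv_update hB hf hu0 hspan hzU hz'
    have hXα := hX.2 α hαcomm
    have h2 : (f ^ i₀) (u i₁) ∈ X := by
      have hmem : α ((f ^ i₀) (u i₁)) ∈ Submodule.map (α : V →ₗ[K] V) X := by
        rw [hXα, hαz i₀, hzy]
        exact hyXU.1
      obtain ⟨x', hx', hxe⟩ := hmem
      rwa [← α.injective hxe]
    have hall : ∀ i, t i = a → (f ^ i₀) (u i) ∈ X := by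
      intro i hi
      by_cases h : i = i₁
      · rw [h]; exact h2
      · obtain ⟨β, hβcomm, hβval⟩ := exists_equiv_add hB hu0 h (by rw [hi, hi₁a])
        have hXβ := hX.2 β hβcomm
        have hmem : (f ^ i₀) (u i₁) + (f ^ i₀) (u i) ∈ X := by
          rw [← hβval i₀, ← hXβ]
          exact Submodule.mem_map_of_mem h2
        have := Submodule.sub_mem X hmem h2
        rwa [add_sub_cancel_left] at this
    apply le_inf
    · rw [hU, subU, Submodule.map_iSup]
      apply iSup_le
      intro i
      rw [Submodule.map_iSup]
      apply iSup_le
      intro hi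
      rw [cyc, Submodule.map_span]
      apply Submodule.span_le.mpr
      rintro _ ⟨_, ⟨j, rfl⟩, rfl⟩
      have hcomm : (f ^ i₀) ((f ^ j) (u i)) = (f ^ j) ((f ^ i₀) (u i)) := by
        rw [← Module.End.mul_apply, ← pow_add, add_comm, pow_add, Module.End.mul_apply]
      rw [hcomm]
      exact chinv_pow_stable hX.1 j _ (hall i hi)
    · exact map_pow_subU_le_subU a i₀

end Phi

theorem stmt6 [FiniteDimensional K V] (f : V →ₗ[K] V) (hf : IsNilpotent f)
    {k : ℕ} (u : Fin k → V) (t : Fin k → ℕ) (ht : Monotone t) (hu : IsGenTuple f u t)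
    (X : Submodule K V) (hX : Chinv f X) :
    Hinv f X ↔ X = ⨆ a ∈ Set.range t, X ⊓ subU f u t a := by
  classical
  have hu0 : ∀ i, (f ^ (t i)) (u i) = 0 := fun i => (hu.1 i).1
  obtain ⟨B, hB⟩ := exists_basis f u t hu
  have hspan : Submodule.span K (Set.range ⇑B) = ⊤ := B.span_eq
  set T := (Set.finite_range t).toFinset with hT
  have hxdec : ∀ x : V, x = ∑ a ∈ T, piU f u t B a x := by
    intro x
    conv_lhs => rw [← LinearMap.id_apply (R := K) x, ← sum_piU hB hu0]
    rw [LinearMap.sum_apply]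
  constructor
  · intro hH
    apply le_antisymm
    · intro x hx
      rw [hxdec x]
      apply Submodule.sum_mem
      intro a ha
      have h1 : piU f u t B a x ∈ X := hH (piU f u t B a) (piU_comm hB hu0 a) ⟨x, hx, rfl⟩
      have h2 : piU f u t B a x ∈ subU f u t a := piU_mem hB hu0 hspan a x
      have haT : a ∈ Set.range t := (Set.Finite.mem_toFinset _).mp ha
      exact Submodule.mem_iSup_of_mem a (Submodule.mem_iSup_of_mem haT ⟨h1, h2⟩)
    · exact iSup₂_le fun a _ => inf_le_left
  · intro hdec g hg
    rintro _ ⟨x, hx, rfl⟩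
    have hproj : ∀ a, piU f u t B a x ∈ X ⊓ subU f u t a := by
      intro a
      have hsub : (⨆ b ∈ Set.range t, X ⊓ subU f u t b) ≤
          (X ⊓ subU f u t a).comap (piU f u t B a) := by
        apply iSup₂_le
        intro b _
        intro x' hx'
        simp only [Submodule.mem_comap]
        by_cases hba : b = a
        · subst hba
          rw [piU_id_on hB hu0 hx'.2]
          exact hx'
        · rw [piU_zero_on hB hu0 hba hx'.2]
          exact Submodule.zero_mem _
      exact hsub (hdec ▸ hx)
    have hgx : g x = ∑ a ∈ T, ∑ b ∈ T, piU f u t B b (g (piU f u t B a x)) := by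
      conv_lhs => rw [hxdec x]
      rw [map_sum]
      refine Finset.sum_congr rfl fun a _ => ?_
      conv_lhs => rw [← LinearMap.id_apply (R := K) (g (piU f u t B a x)), ← sum_piU hB hu0]
      rw [LinearMap.sum_apply]
    rw [hgx]
    apply Submodule.sum_mem
    intro a _
    apply Submodule.sum_mem
    intro b _
    set xa := piU f u t B a x with hxadef
    have hxa := hproj a
    by_cases hba : b = a
    · subst hba
      obtain ⟨i₀, hkb⟩ := keyHom hB hf hu0 hspan X hX b
      have hmm : xa ∈ Submodule.map (f ^ i₀) (subU f u t b) := hkb ▸ hxa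
      obtain ⟨w, hwU, hwz⟩ := hmm
      rw [← hwz]
      have hc1 : g ((f ^ i₀) w) = (f ^ i₀) (g w) := comm_pow_apply hg i₀ w
      have hc2 : piU f u t B b ((f ^ i₀) (g w)) = (f ^ i₀) (piU f u t B b (g w)) :=
        comm_pow_apply (piU_comm hB hu0 b) i₀ _
      rw [hc1, hc2]
      have hmem : (f ^ i₀) (piU f u t B b (g w)) ∈ Submodule.map (f ^ i₀) (subU f u t b) :=
        Submodule.mem_map_of_mem (piU_mem hB hu0 hspan b _)
      rw [← hkb] at hmem
      exact hmem.1
    · set Nb := piU f u t B b ∘ₗ g ∘ₗ piU f u t B a with hNbdef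
      have hsq : ∀ x', Nb (Nb x') = 0 := by
        intro x'
        show piU f u t B b (g (piU f u t B a (piU f u t B b (g (piU f u t B a x'))))) = 0
        rw [piU_zero_on hB hu0 hba (piU_mem hB hu0 hspan b _), map_zero, map_zero]
      have hNcomm : Nb ∘ₗ f = f ∘ₗ Nb := by
        apply LinearMap.ext
        intro x'
        simp only [LinearMap.comp_apply, hNbdef]
        have h1 : piU f u t B a (f x') = f (piU f u t B a x') := by
          have := LinearMap.congr_fun (piU_comm hB hu0 a) x'
          simpa using this
        have h2 : g (f (piU f u t B a x')) = f (g (piU f u t B a x')) := by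
          have := LinearMap.congr_fun hg (piU f u t B a x')
          simpa using this
        have h3 : piU f u t B b (f (g (piU f u t B a x'))) =
            f (piU f u t B b (g (piU f u t B a x'))) := by
          have := LinearMap.congr_fun (piU_comm hB hu0 b) (g (piU f u t B a x'))
          simpa using this
        rw [h1, h2, h3]
      have hcmp1 : (LinearMap.id + Nb) ∘ₗ (LinearMap.id - Nb) = LinearMap.id := by
        apply LinearMap.ext
        intro x'
        simp only [LinearMap.comp_apply, LinearMap.add_apply, LinearMap.sub_apply,
          LinearMap.id_apply, map_sub]
        rw [hsq x']
        abel
      have hcmp2 : (LinearMap.id - Nb) ∘ₗ (LinearMap.id + Nb) = LinearMap.id := by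
        apply LinearMap.ext
        intro x'
        simp only [LinearMap.comp_apply, LinearMap.add_apply, LinearMap.sub_apply,
          LinearMap.id_apply, map_add]
        rw [hsq x']
        abel
      set γ := LinearEquiv.ofLinear (LinearMap.id + Nb) (LinearMap.id - Nb) hcmp1 hcmp2
        with hγdef
      have hγcomm : (γ : V →ₗ[K] V) ∘ₗ f = f ∘ₗ (γ : V →ₗ[K] V) := by
        show (LinearMap.id + Nb) ∘ₗ f = f ∘ₗ (LinearMap.id + Nb)
        apply LinearMap.ext
        intro x'
        have := LinearMap.congr_fun hNcomm x'
        simp only [LinearMap.comp_apply, LinearMap.add_apply, LinearMap.id_apply, map_add] at *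
        rw [this]
      have hXγ := hX.2 γ hγcomm
      have hγxa : γ xa = xa + Nb xa := by
        show ((LinearMap.id + Nb) : V →ₗ[K] V) xa = _
        simp
      have hmem : xa + Nb xa ∈ X := by
        rw [← hγxa, ← hXγ]
        exact Submodule.mem_map_of_mem hxa.1
      have hNmem := Submodule.sub_mem X hmem hxa.1
      rw [add_sub_cancel_left] at hNmem
      have hNval : Nb xa = piU f u t B b (g (piU f u t B a x)) := by
        show piU f u t B b (g (piU f u t B a xa)) = _
        rw [piU_id_on hB hu0 hxa.2]
      rwa [hNval] at hNmem
end
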